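/- For every real number s with 0 < s < 2, the function h_s is integrable on (1/2,1) and lim_{r→∞} (1/(2r+1)) · ∑_{p=r+1}^{2r} h_s( p/(2r+1) ) = ∫_{1/2}^{1} h_s(x) dx, where the limit is taken over positive integers r. -/

import Mathlib

open Filter Finset MeasureTheory Set



lemma hs_bound (s : ℝ) (hs0 : 0 < s) {x y : ℝ} (hy : 1/2 < y) (hyx : y ≤ x) (hx : x < 1) :
    |y * (1 - y) / (2 * y - 1) * (y ^ (-s) - (1 - y) ^ (-s))| ≤
      (s * 4 ^ (s+1) + 2 * 4 ^ s + 2) + 2 * (1 - x) ^ (1 - s) := by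
  have hy1 : y < 1 := lt_of_le_of_lt hyx hx
  have hy0 : (0:ℝ) < y := by linarith
  have h1y : (0:ℝ) < 1 - y := by linarith
  have h1x : (0:ℝ) < 1 - x := by linarith
  have hden : (0:ℝ) < 2 * y - 1 := by linarith
  have h4s : (0:ℝ) ≤ 4 ^ s := Real.rpow_nonneg (by norm_num) _
  have h4s1 : (0:ℝ) ≤ 4 ^ (s+1) := Real.rpow_nonneg (by norm_num) _
  have hgx : (0:ℝ) ≤ (1 - x) ^ (1 - s) := Real.rpow_nonneg h1x.le _
  rcases le_or_gt y (3/4) with hcase | hcase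
  · -- MVT case
    have hab : 1 - y < y := by linarith
    have hfc : ContinuousOn (fun t : ℝ => t ^ (-s)) (Icc (1-y) y) := by
      intro t ht
      have : t ≠ 0 := by have := ht.1; intro h; rw [h] at this; linarith
      exact (Real.continuousAt_rpow_const t (-s) (Or.inl this)).continuousWithinAt
    have hff' : ∀ t ∈ Ioo (1-y) y, HasDerivAt (fun t : ℝ => t ^ (-s)) ((-s) * t ^ (-s - 1)) t := by
      intro t ht
      have ht0 : t ≠ 0 := by have := ht.1; intro h; rw [h] at this; linarith
      exact Real.hasDerivAt_rpow_const (Or.inl ht0)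
    obtain ⟨c, hc, hceq⟩ := exists_hasDerivAt_eq_slope (fun t : ℝ => t ^ (-s))
      (fun t => (-s) * t ^ (-s - 1)) hab hfc hff'
    have hc0 : (1:ℝ)/4 ≤ c := by have := hc.1; linarith
    have hcpos : (0:ℝ) < c := by linarith
    have hsub : y - (1 - y) = 2 * y - 1 := by ring
    have hkey : y ^ (-s) - (1 - y) ^ (-s) = (-s) * c ^ (-s - 1) * (2 * y - 1) := by
      rw [hceq, hsub]
      rw [div_mul_cancel₀ _ hden.ne']
    rw [hkey]
    have habs : y * (1 - y) / (2 * y - 1) * ((-s) * c ^ (-s - 1) * (2 * y - 1))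
        = -(s * (y * (1 - y) * c ^ (-s - 1))) := by
      rw [mul_comm ((-s) * c ^ (-s - 1)) (2 * y - 1), ← mul_assoc, div_mul_cancel₀ _ hden.ne']; ring
    rw [habs, abs_neg, abs_of_nonneg (by positivity)]
    have hcb : c ^ (-s - 1) ≤ ((1:ℝ)/4) ^ (-s - 1) :=
      Real.rpow_le_rpow_of_nonpos (by norm_num) hc0 (by linarith)
    have h14 : ((1:ℝ)/4) ^ (-s - 1) = 4 ^ (s + 1) := by
      rw [one_div, Real.inv_rpow (by norm_num), ← Real.rpow_neg (by norm_num)]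
      ring_nf
    rw [h14] at hcb
    have hyy : y * (1 - y) ≤ 1 := by nlinarith
    have hcnn : (0:ℝ) ≤ c ^ (-s - 1) := Real.rpow_nonneg hcpos.le _
    nlinarith [mul_le_mul hyy hcb hcnn (by norm_num : (0:ℝ) ≤ 1)]
  · -- direct case near 1
    have hA : (0:ℝ) ≤ y ^ (-s) := Real.rpow_nonneg hy0.le _
    have hB : (0:ℝ) ≤ (1-y) ^ (-s) := Real.rpow_nonneg h1y.le _
    have hcoef : y * (1 - y) / (2 * y - 1) ≤ 2 * (1 - y) := by
      rw [div_le_iff₀ hden]; nlinarith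
    have hcoefnn : (0:ℝ) ≤ y * (1 - y) / (2 * y - 1) := by positivity
    have h1 : |y * (1 - y) / (2 * y - 1) * (y ^ (-s) - (1 - y) ^ (-s))|
        ≤ (2 * (1 - y)) * (y ^ (-s) + (1-y) ^ (-s)) := by
      rw [abs_mul, abs_of_nonneg hcoefnn]
      have : |y ^ (-s) - (1 - y) ^ (-s)| ≤ y ^ (-s) + (1-y) ^ (-s) := by
        rw [abs_sub_le_iff]; constructor <;> nlinarith
      calc y * (1 - y) / (2 * y - 1) * |y ^ (-s) - (1 - y) ^ (-s)|
          ≤ (2 * (1 - y)) * |y ^ (-s) - (1 - y) ^ (-s)| :=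
            mul_le_mul_of_nonneg_right hcoef (abs_nonneg _)
        _ ≤ (2 * (1 - y)) * (y ^ (-s) + (1-y) ^ (-s)) :=
            mul_le_mul_of_nonneg_left this (by linarith)
    have hys : y ^ (-s) ≤ 4 ^ s := by
      have h34 : ((3:ℝ)/4) ^ (-s) = ((4:ℝ)/3) ^ s := by
        rw [Real.rpow_neg (by norm_num), ← Real.inv_rpow (by norm_num)]
        norm_num
      calc y ^ (-s) ≤ ((3:ℝ)/4) ^ (-s) :=
            Real.rpow_le_rpow_of_nonpos (by norm_num) hcase.le (by linarith)
        _ = ((4:ℝ)/3) ^ s := h34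
        _ ≤ 4 ^ s := Real.rpow_le_rpow (by norm_num) (by norm_num) hs0.le
    have h1yB : (1 - y) * (1-y) ^ (-s) = (1-y) ^ (1 - s) := by
      rw [show (1:ℝ) - s = 1 + (-s) by ring, Real.rpow_add h1y, Real.rpow_one]
    have h2 : (1-y) ^ (1-s) ≤ 1 + (1-x) ^ (1-s) := by
      rcases le_or_gt s 1 with hs1 | hs1
      · have : (1-y) ^ (1-s) ≤ 1 := Real.rpow_le_one h1y.le (by linarith) (by linarith)
        linarith
      · have : (1-y) ^ (1-s) ≤ (1-x) ^ (1-s) :=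
          Real.rpow_le_rpow_of_nonpos h1x (by linarith) (by linarith)
        linarith
    have hs4 : (0:ℝ) ≤ s * 4 ^ (s+1) := by positivity
    calc |y * (1 - y) / (2 * y - 1) * (y ^ (-s) - (1 - y) ^ (-s))|
        ≤ (2 * (1 - y)) * (y ^ (-s) + (1-y) ^ (-s)) := h1
      _ = 2 * (1-y) * y ^ (-s) + 2 * ((1-y) * (1-y) ^ (-s)) := by ring
      _ = 2 * (1-y) * y ^ (-s) + 2 * (1-y) ^ (1-s) := by rw [h1yB]
      _ ≤ 2 * 4 ^ s + 2 * (1 + (1-x) ^ (1-s)) := by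
          have e1 : 2 * (1-y) * y ^ (-s) ≤ 2 * 4 ^ s := by nlinarith
          nlinarith
      _ ≤ (s * 4 ^ (s+1) + 2 * 4 ^ s + 2) + 2 * (1 - x) ^ (1 - s) := by nlinarith


lemma hs_cont (s : ℝ) {x : ℝ} (hx1 : 1/2 < x) (hx2 : x < 1) :
    ContinuousAt (fun y : ℝ => y * (1 - y) / (2 * y - 1) * (y ^ (-s) - (1 - y) ^ (-s))) x := by
  have hx0 : x ≠ 0 := by intro h; rw [h] at hx1; norm_num at hx1
  have h1x : (1:ℝ) - x ≠ 0 := by intro h; nlinarith [h]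
  have hden : 2 * x - 1 ≠ 0 := by intro h; nlinarith [h]
  have c1 : ContinuousAt (fun y : ℝ => y ^ (-s)) x :=
    Real.continuousAt_rpow_const x (-s) (Or.inl hx0)
  have c2 : ContinuousAt (fun y : ℝ => (1 - y) ^ (-s)) x := by
    have := (Real.continuousAt_rpow_const (1-x) (-s) (Or.inl h1x)).comp
      (g := fun t : ℝ => t ^ (-s)) ((continuous_const.sub continuous_id).continuousAt (x := x))
    exact this
  exact ((continuousAt_id.mul (continuous_const.sub continuous_id).continuousAt).div
    (((continuous_const.mul continuous_id).sub continuous_const).continuousAt) hden).mul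
    (c1.sub c2)

lemma g_integrable (s : ℝ) (hs2 : s < 2) :
    IntegrableOn (fun x : ℝ => (s * 4 ^ (s+1) + 2 * 4 ^ s + 2) + 2 * (1 - x) ^ (1 - s))
      (Set.Ioo (1/2 : ℝ) 1) := by
  apply Integrable.add
  · exact (integrableOn_const_iff (by finiteness)).mpr (Or.inr (by simp [Real.volume_Ioo]))
  · have h1 : IntervalIntegrable (fun x : ℝ => x ^ (1 - s)) volume 0 (1/2) :=
      intervalIntegral.intervalIntegrable_rpow' (by linarith)
    have h2 := h1.comp_sub_left 1
    norm_num at h2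
    rw [intervalIntegrable_iff] at h2
    have h3 : Set.uIoc (1:ℝ) (1/2 : ℝ) = Set.Ioc (1/2 : ℝ) 1 := by
      rw [Set.uIoc_of_ge (by norm_num)]
    rw [h3] at h2
    exact (h2.mono_set Set.Ioo_subset_Ioc_self).const_mul 2


noncomputable def stepF (φ : ℝ → ℝ) (r : ℕ) (x : ℝ) : ℝ :=
  ∑ p ∈ Finset.Icc (r+1) (2*r),
    (Set.Ico ((p:ℝ)/(2*(r:ℝ)+1)) (((p:ℝ)+1)/(2*(r:ℝ)+1))).indicator
      (fun _ => φ ((p:ℝ)/(2*(r:ℝ)+1))) x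

lemma stepF_eq (φ : ℝ → ℝ) (r p : ℕ) (x : ℝ) (hp : p ∈ Finset.Icc (r+1) (2*r))
    (h1 : (p:ℝ)/(2*(r:ℝ)+1) ≤ x) (h2 : x < ((p:ℝ)+1)/(2*(r:ℝ)+1)) :
    stepF φ r x = φ ((p:ℝ)/(2*(r:ℝ)+1)) := by
  have hn : (0:ℝ) < 2*(r:ℝ)+1 := by positivity
  unfold stepF
  refine (Finset.sum_eq_single_of_mem p hp ?_).trans (Set.indicator_of_mem (Set.mem_Ico.mpr ⟨h1, h2⟩) _)
  · intro q hq hne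
    apply Set.indicator_of_notMem
    intro hmem
    obtain ⟨hq1, hq2⟩ := hmem
    have e1 : (p:ℝ) ≤ x * (2*(r:ℝ)+1) := by rwa [div_le_iff₀ hn] at h1
    have e2 : x * (2*(r:ℝ)+1) < (p:ℝ)+1 := by rwa [lt_div_iff₀ hn] at h2
    have e3 : (q:ℝ) ≤ x * (2*(r:ℝ)+1) := by rwa [div_le_iff₀ hn] at hq1
    have e4 : x * (2*(r:ℝ)+1) < (q:ℝ)+1 := by rwa [lt_div_iff₀ hn] at hq2
    have : (p:ℝ) < (q:ℝ)+1 := lt_of_le_of_lt e1 e4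
    have h5 : p < q + 1 := by exact_mod_cast this
    have : (q:ℝ) < (p:ℝ)+1 := lt_of_le_of_lt e3 e2
    have h6 : q < p + 1 := by exact_mod_cast this
    omega

lemma stepF_zero (φ : ℝ → ℝ) (r : ℕ) (x : ℝ)
    (hex : ¬ ∃ p ∈ Finset.Icc (r+1) (2*r),
      (p:ℝ)/(2*(r:ℝ)+1) ≤ x ∧ x < ((p:ℝ)+1)/(2*(r:ℝ)+1)) :
    stepF φ r x = 0 := by
  apply Finset.sum_eq_zero
  intro p hp
  exact Set.indicator_of_notMem (fun hmem => hex ⟨p, hp, hmem.1, hmem.2⟩) _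

lemma stepF_measurable (φ : ℝ → ℝ) (r : ℕ) : Measurable (stepF φ r) :=
  Finset.measurable_sum _ (fun p _ => Measurable.indicator measurable_const measurableSet_Ico)

lemma Ico_subset (r p : ℕ) (hp : p ∈ Finset.Icc (r+1) (2*r)) :
    Set.Ico ((p:ℝ)/(2*(r:ℝ)+1)) (((p:ℝ)+1)/(2*(r:ℝ)+1)) ⊆ Set.Ioo (1/2 : ℝ) 1 := by
  have hn : (0:ℝ) < 2*(r:ℝ)+1 := by positivity
  rw [Finset.mem_Icc] at hp
  have hp1 : ((r:ℝ)+1) ≤ (p:ℝ) := by exact_mod_cast hp.1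
  have hp2 : (p:ℝ) ≤ 2*(r:ℝ) := by exact_mod_cast hp.2
  rintro z ⟨hz1, hz2⟩
  constructor
  · have : ((r:ℝ)+1)/(2*(r:ℝ)+1) ≤ (p:ℝ)/(2*(r:ℝ)+1) := by
      gcongr
    have h12 : (1:ℝ)/2 < ((r:ℝ)+1)/(2*(r:ℝ)+1) := by
      rw [div_lt_div_iff₀ (by norm_num) hn]; linarith
    linarith
  · have : ((p:ℝ)+1)/(2*(r:ℝ)+1) ≤ 1 := by
      rw [div_le_one hn]; linarith
    linarith

lemma stepF_integral (φ : ℝ → ℝ) (r : ℕ) :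
    ∫ x in Set.Ioo (1/2 : ℝ) 1, stepF φ r x =
      (1/(2*(r:ℝ)+1)) * ∑ p ∈ Finset.Icc (r+1) (2*r), φ ((p:ℝ)/(2*(r:ℝ)+1)) := by
  have hn : (0:ℝ) < 2*(r:ℝ)+1 := by positivity
  unfold stepF
  rw [integral_finset_sum]
  · rw [Finset.mul_sum]
    apply Finset.sum_congr rfl
    intro p hp
    rw [integral_indicator_const _ measurableSet_Ico, measureReal_restrict_apply measurableSet_Ico,
      Set.inter_eq_self_of_subset_left (Ico_subset r p hp),
      Real.volume_real_Ico_of_le (by gcongr; linarith), smul_eq_mul]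
    congr 1
    field_simp; ring
  · intro p _
    rw [integrable_indicator_iff measurableSet_Ico]
    refine (integrableOn_const_iff (by finiteness)).mpr ?_
    right
    exact lt_of_le_of_lt (Measure.restrict_apply_le _ _) measure_Ico_lt_top


theorem stmt3 (s : ℝ) (hs0 : 0 < s) (hs2 : s < 2) :
    MeasureTheory.IntegrableOn
        (fun x : ℝ => x * (1 - x) / (2 * x - 1) * (x ^ (-s) - (1 - x) ^ (-s)))
        (Set.Ioo (1 / 2 : ℝ) 1) ∧
      Filter.Tendsto
        (fun r : ℕ => (1 / (2 * (r : ℝ) + 1)) *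
          ∑ p ∈ Finset.Icc (r + 1) (2 * r),
            (fun x : ℝ => x * (1 - x) / (2 * x - 1) * (x ^ (-s) - (1 - x) ^ (-s)))
              ((p : ℝ) / (2 * (r : ℝ) + 1)))
        Filter.atTop
        (nhds (∫ x in Set.Ioo (1 / 2 : ℝ) 1,
          x * (1 - x) / (2 * x - 1) * (x ^ (-s) - (1 - x) ^ (-s)))) := by
  set φ : ℝ → ℝ := fun x : ℝ => x * (1 - x) / (2 * x - 1) * (x ^ (-s) - (1 - x) ^ (-s)) with hφ
  set g : ℝ → ℝ := fun x : ℝ => (s * 4 ^ (s+1) + 2 * 4 ^ s + 2) + 2 * (1 - x) ^ (1 - s) with hg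
  have hgint : IntegrableOn g (Set.Ioo (1/2 : ℝ) 1) := g_integrable s hs2
  have hgnonneg : ∀ x : ℝ, x < 1 → 0 ≤ g x := by
    intro x hx
    have h1 : (0:ℝ) ≤ 4 ^ s := Real.rpow_nonneg (by norm_num) _
    have h2 : (0:ℝ) ≤ 4 ^ (s+1) := Real.rpow_nonneg (by norm_num) _
    have h3 : (0:ℝ) ≤ (1-x) ^ (1-s) := Real.rpow_nonneg (by linarith) _
    have h4 : (0:ℝ) ≤ s * 4 ^ (s+1) := mul_nonneg hs0.le h2
    simp only [hg]
    linarith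
  have hcontOn : ContinuousOn φ (Set.Ioo (1/2 : ℝ) 1) := by
    intro x hx
    exact (hs_cont s hx.1 hx.2).continuousWithinAt
  have hmeas : AEStronglyMeasurable φ (volume.restrict (Set.Ioo (1/2 : ℝ) 1)) :=
    hcontOn.aestronglyMeasurable measurableSet_Ioo
  have hint : IntegrableOn φ (Set.Ioo (1/2 : ℝ) 1) := by
    apply Integrable.mono' hgint hmeas
    rw [ae_restrict_iff' measurableSet_Ioo]
    filter_upwards with x hx
    rw [Real.norm_eq_abs]
    exact hs_bound s hs0 hx.1 le_rfl hx.2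
  refine ⟨hint, ?_⟩
  have key : Tendsto (fun r : ℕ => ∫ x in Set.Ioo (1/2 : ℝ) 1, stepF φ r x) atTop
      (nhds (∫ x in Set.Ioo (1/2 : ℝ) 1, φ x)) := by
    apply tendsto_integral_of_dominated_convergence g
      (fun r => (stepF_measurable φ r).aestronglyMeasurable) hgint
    · -- bound
      intro r
      rw [ae_restrict_iff' measurableSet_Ioo]
      filter_upwards with x hx
      by_cases hex : ∃ p ∈ Finset.Icc (r+1) (2*r),
          (p:ℝ)/(2*(r:ℝ)+1) ≤ x ∧ x < ((p:ℝ)+1)/(2*(r:ℝ)+1)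
      · obtain ⟨p, hp, h1, h2⟩ := hex
        rw [stepF_eq φ r p x hp h1 h2, Real.norm_eq_abs]
        have hn : (0:ℝ) < 2*(r:ℝ)+1 := by positivity
        have hp1 : ((r:ℝ)+1) ≤ (p:ℝ) := by exact_mod_cast (Finset.mem_Icc.mp hp).1
        have hy : 1/2 < (p:ℝ)/(2*(r:ℝ)+1) := by
          rw [lt_div_iff₀ hn]; linarith
        exact hs_bound s hs0 hy h1 hx.2
      · rw [stepF_zero φ r x hex, norm_zero]
        exact hgnonneg x hx.2
    · -- pointwise convergence
      rw [ae_restrict_iff' measurableSet_Ioo]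
      filter_upwards with x hx
      have hx1 : 1/2 < x := hx.1
      have hx2 : x < 1 := hx.2
      have hx0 : 0 < x := by linarith
      have hcx : ContinuousAt φ x := hs_cont s hx1 hx2
      have hinv : Tendsto (fun r : ℕ => 1/(2*(r:ℝ)+1)) atTop (nhds 0) := by
        apply Tendsto.comp tendsto_inv_atTop_zero ?_ |>.congr (fun r => by rw [Function.comp, one_div])
        apply tendsto_atTop_add_const_right
        exact (tendsto_natCast_atTop_atTop (R := ℝ)).const_mul_atTop (by norm_num)
      have hfl : Tendsto (fun r : ℕ => (⌊x*(2*(r:ℝ)+1)⌋₊ : ℝ)/(2*(r:ℝ)+1)) atTop (nhds x) := by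
        refine tendsto_of_tendsto_of_tendsto_of_le_of_le
          (g := fun r : ℕ => x - 1/(2*(r:ℝ)+1)) (h := fun _ => x)
          (by simpa using tendsto_const_nhds.sub hinv) tendsto_const_nhds ?_ ?_
        · intro r
          have hn : (0:ℝ) < 2*(r:ℝ)+1 := by positivity
          have hflo := Nat.lt_floor_add_one (x*(2*(r:ℝ)+1))
          rw [le_div_iff₀ hn]
          have hexp : (x - 1/(2*(r:ℝ)+1)) * (2*(r:ℝ)+1) = x*(2*(r:ℝ)+1) - 1 := by
            field_simp
          rw [hexp]
          linarith
        · intro r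
          have hn : (0:ℝ) < 2*(r:ℝ)+1 := by positivity
          rw [div_le_iff₀ hn]
          exact Nat.floor_le (by positivity)
      have hev : ∀ᶠ r : ℕ in atTop, stepF φ r x = φ ((⌊x*(2*(r:ℝ)+1)⌋₊ : ℝ)/(2*(r:ℝ)+1)) := by
        have h2x : (0:ℝ) < 2*x - 1 := by linarith
        filter_upwards [hinv.eventually (eventually_lt_nhds h2x)] with r hr
        have hn : (0:ℝ) < 2*(r:ℝ)+1 := by positivity
        have hxn : ((r:ℝ)+1) ≤ x*(2*(r:ℝ)+1) := by
          rw [one_div] at hr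
          have h1 : (2*(r:ℝ)+1)⁻¹ * (2*(r:ℝ)+1) = 1 := inv_mul_cancel₀ hn.ne'
          nlinarith [mul_lt_mul_of_pos_right hr hn]
        have hm1 : r + 1 ≤ ⌊x*(2*(r:ℝ)+1)⌋₊ := by
          apply Nat.le_floor
          push_cast
          exact hxn
        have hm2 : ⌊x*(2*(r:ℝ)+1)⌋₊ ≤ 2*r := by
          have hle : (⌊x*(2*(r:ℝ)+1)⌋₊ : ℝ) ≤ x*(2*(r:ℝ)+1) := Nat.floor_le (by positivity)
          have : (⌊x*(2*(r:ℝ)+1)⌋₊ : ℝ) < 2*(r:ℝ)+1 := by nlinarith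
          have : ⌊x*(2*(r:ℝ)+1)⌋₊ < 2*r+1 := by exact_mod_cast (by push_cast; linarith : (⌊x*(2*(r:ℝ)+1)⌋₊ : ℝ) < ((2*r+1 : ℕ) : ℝ))
          omega
        apply stepF_eq φ r _ x (Finset.mem_Icc.mpr ⟨hm1, hm2⟩)
        · rw [div_le_iff₀ hn]; exact Nat.floor_le (by positivity)
        · rw [lt_div_iff₀ hn]; exact Nat.lt_floor_add_one _
      exact (hcx.tendsto.comp hfl).congr' (by filter_upwards [hev] with r hr; exact hr.symm)
  apply key.congr
  intro r
  rw [stepF_integral φ r]
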